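/- arXiv:2305.03559 — 3 statements merged into one kernel-verified Lean document; each statement's English description precedes it below -/
import Mathlib

section
/- Let (σ_k) be a sequence of positive reals with σ_{k+1} ∈ [¾σ_k, σ_k] for all k, and let (α_k) be positive reals satisfying α_{k+1} ≤ √(σ_k/σ_{k-1} · (1 + ρ_k)) · (σ_k/σ_{k+1}) · α_k, where ρ_k = σ_k α_k / (σ_{k-1} α_{k-1}). Then ρ_{k+1} ≤ √(1 + ρ_k) for all k, and consequently sup_k ρ_k ≤ (1 + √5)/2 provided ρ_0 ≤ (1+√5)/2. -/
theorem stmt3 (σ α : ℕ → ℝ)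
    (hσpos : ∀ k, 0 < σ k)
    (hσ : ∀ k, σ (k + 1) ∈ Set.Icc ((3 / 4) * σ k) (σ k))
    (hαpos : ∀ k, 0 < α k)
    (ρ : ℕ → ℝ)
    (hρ : ∀ k, ρ k = σ k * α k / (σ (k - 1) * α (k - 1)))
    (hα : ∀ k, α (k + 1) ≤
      Real.sqrt (σ k / σ (k - 1) * (1 + ρ k)) * (σ k / σ (k + 1)) * α k) :
    (∀ k, ρ (k + 1) ≤ Real.sqrt (1 + ρ k)) ∧
    (ρ 0 ≤ (1 + Real.sqrt 5) / 2 → ∀ k, ρ k ≤ (1 + Real.sqrt 5) / 2) := by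
  have hρpos : ∀ k, 0 < ρ k := by
    intro k
    rw [hρ k]
    exact div_pos (mul_pos (hσpos k) (hαpos k)) (mul_pos (hσpos (k-1)) (hαpos (k-1)))
  have hmono : ∀ k, σ k ≤ σ (k - 1) := by
    intro k
    cases k with
    | zero => simp
    | succ n => simpa using (hσ n).2
  have h1 : ∀ k, ρ (k + 1) ≤ Real.sqrt (1 + ρ k) := by
    intro k
    have hσk := hσpos k
    have hσk1 := hσpos (k + 1)
    have hαk := hαpos k
    have step : ρ (k + 1) ≤ Real.sqrt (σ k / σ (k - 1) * (1 + ρ k)) := by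
      rw [hρ (k + 1)]
      simp only [Nat.add_sub_cancel]
      rw [div_le_iff₀ (by positivity)]
      calc σ (k + 1) * α (k + 1)
          ≤ σ (k + 1) * (Real.sqrt (σ k / σ (k - 1) * (1 + ρ k)) * (σ k / σ (k + 1)) * α k) :=
            by exact mul_le_mul_of_nonneg_left (hα k) hσk1.le
        _ = Real.sqrt (σ k / σ (k - 1) * (1 + ρ k)) * (σ k * α k) := by
            field_simp
    refine step.trans (Real.sqrt_le_sqrt ?_)
    have h01 : σ k / σ (k - 1) ≤ 1 := div_le_one_of_le₀ (hmono k) (hσpos (k - 1)).le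
    have : (0:ℝ) ≤ 1 + ρ k := by linarith [hρpos k]
    nlinarith
  refine ⟨h1, fun h0 k => ?_⟩
  have hφ : Real.sqrt (1 + (1 + Real.sqrt 5) / 2) = (1 + Real.sqrt 5) / 2 := by
    have h5 : Real.sqrt 5 ^ 2 = 5 := Real.sq_sqrt (by norm_num)
    have h5pos : (0:ℝ) ≤ Real.sqrt 5 := Real.sqrt_nonneg 5
    rw [show 1 + (1 + Real.sqrt 5) / 2 = ((1 + Real.sqrt 5) / 2) ^ 2 by nlinarith]
    exact Real.sqrt_sq (by positivity)
  induction k with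
  | zero => exact h0
  | succ n ih =>
    calc ρ (n + 1) ≤ Real.sqrt (1 + ρ n) := h1 n
      _ ≤ Real.sqrt (1 + (1 + Real.sqrt 5) / 2) := Real.sqrt_le_sqrt (by linarith)
      _ = (1 + Real.sqrt 5) / 2 := hφ
end

section
/- With σ_{k+1} ∈ [¾σ_k, σ_k] and α_{k+1} = ν/(σ_{k+1}L₁ + L₂) (ν ∈ (0,1), L₁, L₂ > 0), for every k one has α_{k+1} ≤ √(σ_k/σ_{k-1} · (1 + ρ_k)) · (σ_k/σ_{k+1}) · α_k, where ρ_k = σ_kα_k/(σ_{k-1}α_{k-1}). -/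
theorem stmt11 (σ : ℕ → ℝ) (hσpos : ∀ k, 0 < σ k)
    (hσ : ∀ k, σ (k + 1) ∈ Set.Icc ((3 / 4) * σ k) (σ k))
    (ν L₁ L₂ : ℝ) (hν : ν ∈ Set.Ioo (0 : ℝ) 1) (hL₁ : 0 < L₁) (hL₂ : 0 < L₂)
    (α : ℕ → ℝ) (hα : ∀ k, α k = ν / (σ k * L₁ + L₂))
    (ρ : ℕ → ℝ)
    (hρ : ∀ k, ρ k = σ k * α k / (σ (k - 1) * α (k - 1))) :
    ∀ k, α (k + 1) ≤
      Real.sqrt (σ k / σ (k - 1) * (1 + ρ k)) * (σ k / σ (k + 1)) * α k := by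
  intro k
  obtain ⟨hν0, hν1⟩ := hν
  set a := σ (k - 1) with ha
  set b := σ k with hb
  set c := σ (k + 1) with hc
  have hapos : 0 < a := hσpos _
  have hbpos : 0 < b := hσpos _
  have hcpos : 0 < c := hσpos _
  have hDa : 0 < a * L₁ + L₂ := by positivity
  have hDb : 0 < b * L₁ + L₂ := by positivity
  have hDc : 0 < c * L₁ + L₂ := by positivity
  obtain ⟨hcb1, hcb2⟩ := hσ k
  have hba : (3 / 4) * a ≤ b ∧ b ≤ a := by
    rcases Nat.eq_zero_or_pos k with hk | hk
    · subst hk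
      constructor
      · show (3/4) * σ 0 ≤ σ 0; nlinarith [hσpos 0]
      · exact le_refl _
    · have h1 : k - 1 + 1 = k := by omega
      have := hσ (k - 1)
      rw [h1] at this
      exact ⟨this.1, this.2⟩
  obtain ⟨hba1, hba2⟩ := hba
  have hcb2' : c ≤ b := hcb2
  have hcb1' : (3 / 4) * b ≤ c := hcb1
  have hαk : α k = ν / (b * L₁ + L₂) := hα k
  have hαk1 : α (k + 1) = ν / (c * L₁ + L₂) := hα (k + 1)
  have hαkm : α (k - 1) = ν / (a * L₁ + L₂) := hα (k - 1)
  have hαkpos : 0 < α k := by rw [hαk]; positivity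
  -- Step 1 : α(k+1) ≤ (b/c) * α k
  have step1 : α (k + 1) ≤ (b / c) * α k := by
    rw [hαk, hαk1, div_mul_div_comm]
    rw [div_le_div_iff₀ hDc (by positivity)]
    nlinarith [mul_nonneg (mul_nonneg hν0.le hL₂.le) (sub_nonneg.mpr hcb2')]
  -- ρ k ≥ b / a
  have hρk : ρ k = (b * (a * L₁ + L₂)) / (a * (b * L₁ + L₂)) := by
    rw [hρ k, hαk, hαkm, ← hb, ← ha]
    field_simp
  have hρge : b / a ≤ ρ k := by
    rw [hρk, div_le_div_iff₀ hapos (by positivity)]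
    nlinarith [mul_nonneg (mul_nonneg (mul_pos hapos hbpos).le hL₁.le) (sub_nonneg.mpr hba2)]
  -- Step 2 : 1 ≤ sqrt term
  have step2 : (1 : ℝ) ≤ Real.sqrt (b / a * (1 + ρ k)) := by
    apply Real.one_le_sqrt.mpr
    have h1 : (3 / 4 : ℝ) ≤ b / a := by
      rw [le_div_iff₀ hapos]; linarith
    nlinarith [hρge, h1]
  have hbc : 0 ≤ (b / c) * α k := by positivity
  calc α (k + 1) ≤ (b / c) * α k := step1
    _ = 1 * ((b / c) * α k) := by ring
    _ ≤ Real.sqrt (b / a * (1 + ρ k)) * ((b / c) * α k) :=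
        mul_le_mul_of_nonneg_right step2 hbc
    _ = Real.sqrt (b / a * (1 + ρ k)) * (b / c) * α k := by ring
end

section
/- Let f : ℝⁿ → ℝ be convex and continuously differentiable, g : ℝⁿ → ℝ ∪ {∞} proper lsc convex, α > 0, and suppose x⁺ = prox_{αg}(x - α∇f(x)) with ℓ := ⟨∇f(x) - ∇f(x⁺), x - x⁺⟩/‖x - x⁺‖² satisfying αℓ ≤ ν for some ν ∈ (0,1) (when x ≠ x⁺). Then (f+g)(x⁺) ≤ (f+g)(x) - ((1-ν)/α)‖x⁺ - x‖². -/
open scoped RealInnerProductSpace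

/-- `p` is the proximal point `prox_{αg}(u)`. -/
def IsProx {E : Type*} [NormedAddCommGroup E] [InnerProductSpace ℝ E]
    (α : ℝ) (g : E → ℝ) (u p : E) : Prop :=
  ∀ w, g p + (1 / (2 * α)) * ‖p - u‖ ^ 2 ≤ g w + (1 / (2 * α)) * ‖w - u‖ ^ 2

open Filter Topology in
/-- First-order condition for a convex differentiable function. -/
lemma grad_convex_le {E : Type*} [NormedAddCommGroup E] [InnerProductSpace ℝ E]
    [CompleteSpace E] {f : E → ℝ} {f' : E} {x y : E} (hconv : ConvexOn ℝ Set.univ f)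
    (hx : HasGradientAt f f' x) : f x + ⟪f', y - x⟫ ≤ f y := by
  have h1 : HasDerivAt (fun t : ℝ => x + t • (y - x)) (y - x) 0 := by
    simpa using ((hasDerivAt_id (0 : ℝ)).smul_const (y - x)).const_add x
  have h2 : HasFDerivAt f (InnerProductSpace.toDual ℝ E f')
      ((fun t : ℝ => x + t • (y - x)) 0) := by
    simpa using hx.hasFDerivAt
  have hφ : HasDerivAt (fun t : ℝ => f (x + t • (y - x))) ⟪f', y - x⟫ 0 := by
    have h3 := h2.comp_hasDerivAt 0 h1
    simp at h3
    exact h3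
  have hslope : Tendsto (slope (fun t : ℝ => f (x + t • (y - x))) 0) (𝓝[>] 0)
      (𝓝 ⟪f', y - x⟫) :=
    (hasDerivAt_iff_tendsto_slope.1 hφ).mono_left
      (nhdsWithin_mono 0 fun t ht => ne_of_gt ht)
  have hbound : ∀ᶠ t in 𝓝[>] (0 : ℝ),
      slope (fun t : ℝ => f (x + t • (y - x))) 0 t ≤ f y - f x := by
    filter_upwards [Ioo_mem_nhdsGT_of_mem (by norm_num : (0 : ℝ) ∈ Set.Ico 0 1)] with t ht
    have hc := hconv.2 (Set.mem_univ x) (Set.mem_univ y)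
      (by linarith [ht.2] : (0 : ℝ) ≤ 1 - t) (le_of_lt ht.1) (by ring)
    have hxy : x + t • (y - x) = (1 - t) • x + t • y := by module
    have hslope_eq : slope (fun t : ℝ => f (x + t • (y - x))) 0 t
        = (f (x + t • (y - x)) - f x) / t := by
      simp [slope_def_field]
    rw [hslope_eq, div_le_iff₀ ht.1, hxy]
    simp only [smul_eq_mul] at hc
    nlinarith [hc]
  have := le_of_tendsto hslope hbound
  linarith

theorem stmt12 {n : ℕ} (f : EuclideanSpace ℝ (Fin n) → ℝ)
    (f' : EuclideanSpace ℝ (Fin n) → EuclideanSpace ℝ (Fin n))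
    (hconv : ConvexOn ℝ Set.univ f)
    (hdiff : ∀ z, HasGradientAt f (f' z) z)
    (g : EuclideanSpace ℝ (Fin n) → ℝ)
    (hg : ConvexOn ℝ Set.univ g) (hglsc : LowerSemicontinuous g)
    (α ν : ℝ) (hα : 0 < α) (hν : ν ∈ Set.Ioo (0 : ℝ) 1)
    (x xp : EuclideanSpace ℝ (Fin n))
    (hprox : IsProx α g (x - α • f' x) xp)
    (hLS : x ≠ xp →
      α * (⟪f' x - f' xp, x - xp⟫ / ‖x - xp‖ ^ 2) ≤ ν) :
    f xp + g xp ≤ f x + g x - ((1 - ν) / α) * ‖xp - x‖ ^ 2 := by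
  rcases eq_or_ne x xp with h | h
  · subst h; simp
  set u := x - α • f' x with hu
  set S := ‖x - xp‖ ^ 2 with hS
  have hSpos : 0 < S := by
    have hne : x - xp ≠ 0 := sub_ne_zero.2 h
    exact pow_pos (norm_pos_iff.2 hne) 2
  set I := ⟪xp - u, x - xp⟫ with hI
  -- subgradient-type inequality for g from the prox property
  have hsub : ∀ t : ℝ, t ∈ Set.Ioc (0 : ℝ) 1 →
      g xp ≤ g x + (1 / α) * I + (t / (2 * α)) * S := by
    intro t ht
    have key := hprox (xp + t • (x - xp))
    have hxyt : (1 - t) • xp + t • x = xp + t • (x - xp) := by module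
    have hcvx : g (xp + t • (x - xp)) ≤ (1 - t) * g xp + t * g x := by
      have := hg.2 (Set.mem_univ xp) (Set.mem_univ x)
        (by linarith [ht.2] : (0 : ℝ) ≤ 1 - t) (le_of_lt ht.1) (by ring)
      simpa [hxyt] using this
    have hexp : ‖(xp + t • (x - xp)) - u‖ ^ 2 = ‖xp - u‖ ^ 2 + 2 * t * I + t ^ 2 * S := by
      have hrw : (xp + t • (x - xp)) - u = (xp - u) + t • (x - xp) := by abel
      rw [hrw, norm_add_sq_real, real_inner_smul_right, norm_smul, Real.norm_eq_abs,
        mul_pow, sq_abs, hI, hS]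
      ring
    have h2 : t * g xp ≤ t * g x + (1 / (2 * α)) * (2 * t * I + t ^ 2 * S) := by
      rw [hexp] at key
      nlinarith [key, hcvx]
    have heq : t * g x + (1 / (2 * α)) * (2 * t * I + t ^ 2 * S)
        = t * (g x + (1 / α) * I + (t / (2 * α)) * S) := by
      field_simp; ring
    rw [heq] at h2
    exact le_of_mul_le_mul_left h2 ht.1
  -- value of the inner product I
  have hIval : I = -S + α * ⟪f' x, x - xp⟫ := by
    have hrw : xp - u = -(x - xp) + α • f' x := by rw [hu]; module
    rw [hI, hrw, inner_add_left, real_inner_smul_left, inner_neg_left,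
      real_inner_self_eq_norm_sq, hS]
  -- gradient inequality for f at xp
  have hgrad : f xp + ⟪f' xp, x - xp⟫ ≤ f x := grad_convex_le hconv (hdiff xp)
  -- bound on the curvature term
  have hJ : α * ⟪f' x - f' xp, x - xp⟫ ≤ ν * S := by
    have hL := hLS h
    have h1 := mul_le_mul_of_nonneg_right hL hSpos.le
    calc α * ⟪f' x - f' xp, x - xp⟫
        = α * (⟪f' x - f' xp, x - xp⟫ / S) * S := by
          rw [mul_assoc, div_mul_cancel₀ _ hSpos.ne']
      _ ≤ ν * S := h1
  have hJ' : ⟪f' x - f' xp, x - xp⟫ ≤ ν * S / α := by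
    rw [le_div_iff₀ hα]; linarith
  have hsplit : ⟪f' x - f' xp, x - xp⟫ = ⟪f' x, x - xp⟫ - ⟪f' xp, x - xp⟫ :=
    inner_sub_left _ _ _
  have hIdiv : (1 / α) * I = -(S / α) + ⟪f' x, x - xp⟫ := by
    rw [hIval]; field_simp
  have hnorm : ‖xp - x‖ ^ 2 = S := by rw [hS, norm_sub_rev]
  rw [hnorm]
  refine le_of_forall_pos_le_add fun ε hε => ?_
  set t : ℝ := min 1 (2 * α * ε / S) with ht
  have htpos : 0 < t := lt_min one_pos (by positivity)
  have htmem : t ∈ Set.Ioc (0 : ℝ) 1 := ⟨htpos, min_le_left _ _⟩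
  have hterm : (t / (2 * α)) * S ≤ ε := by
    have h1 : t ≤ 2 * α * ε / S := min_le_right _ _
    have h2 : t * S ≤ 2 * α * ε := (le_div_iff₀ hSpos).1 h1
    rw [div_mul_eq_mul_div, div_le_iff₀ (by positivity : (0:ℝ) < 2 * α)]
    linarith
  have hg2 := hsub t htmem
  have hdivS : (1 - ν) / α * S = S / α - ν * S / α := by ring
  linarith [hg2, hgrad, hJ', hsplit, hIdiv, hterm, hdivS]
end
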